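/- Under the relations Σ_k Ṽ₂₁* = Ũ₂₁* Σ̂_{l∖k} + Ũ₃₁* E₃₂ and Ũ₂₁ Σ_k = Σ̂_{l∖k} Ṽ₂₁, with σ̂_{k+1} := ‖Σ̂_{l∖k}‖₂ < σ_k, for any unitarily invariant norm: ⦀Ṽ₂₁⦀ ≤ (‖E₃₂‖₂/γ₁)·⦀Ũ₃₁⦀, where γ₁ = (σ_k² − σ̂_{k+1}²)/σ_k. -/

import Mathlib

open Matrix

noncomputable def eigval {n : Type} [Fintype n] [DecidableEq n] {M : Matrix n n ℂ}
    (hM : M.IsHermitian) (j : ℕ) : ℝ :=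
  ((Multiset.map hM.eigenvalues Finset.univ.val).sort (· ≤ ·)).getD (Fintype.card n - j) 0

section aux
variable {n : Type} [Fintype n] [DecidableEq n] {M : Matrix n n ℂ}

lemma eigval_length (hM : M.IsHermitian) :
    ((Multiset.map hM.eigenvalues Finset.univ.val).sort (· ≤ ·)).length = Fintype.card n := by
  simp [Multiset.length_sort]

lemma eigval_one_exists (hM : M.IsHermitian) (h : Fintype.card n ≠ 0) :
    ∃ i, eigval hM 1 = hM.eigenvalues i := by
  set l := ((Multiset.map hM.eigenvalues Finset.univ.val).sort (· ≤ ·)) with hl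
  have hlen : l.length = Fintype.card n := eigval_length hM
  have hidx : Fintype.card n - 1 < l.length := by omega
  obtain ⟨x, hx, hmem⟩ : ∃ x, eigval hM 1 = x ∧ x ∈ l :=
    ⟨_, List.getD_eq_getElem l 0 hidx, List.getElem_mem hidx⟩
  rw [hl, Multiset.mem_sort, Multiset.mem_map] at hmem
  obtain ⟨i, _, hi⟩ := hmem
  exact ⟨i, by rw [hx, hi]⟩

lemma eigenvalues_le_eigval_one (hM : M.IsHermitian) (i : n) :
    hM.eigenvalues i ≤ eigval hM 1 := by
  set l := ((Multiset.map hM.eigenvalues Finset.univ.val).sort (· ≤ ·)) with hl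
  have hlen : l.length = Fintype.card n := eigval_length hM
  have hcard : Fintype.card n ≠ 0 := by
    have : Nonempty n := ⟨i⟩
    simp [Fintype.card_ne_zero]
  have hidx : Fintype.card n - 1 < l.length := by omega
  have heq : eigval hM 1 = l[Fintype.card n - 1] := List.getD_eq_getElem l 0 hidx
  have hmem : hM.eigenvalues i ∈ l := by
    rw [hl, Multiset.mem_sort, Multiset.mem_map]
    exact ⟨i, Finset.mem_univ i, rfl⟩
  obtain ⟨j, hj, hji⟩ := List.mem_iff_getElem.mp hmem
  have hsort : List.Pairwise (· ≤ ·) l := Multiset.pairwise_sort _ _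
  rcases lt_or_eq_of_le (by omega : j ≤ Fintype.card n - 1) with hlt | hje
  · have := (List.pairwise_iff_getElem.mp hsort) j (Fintype.card n - 1) hj hidx hlt
    rw [heq, ← hji]; exact this
  · rw [heq, ← hji]; simp [hje]

lemma eigval_one_zero (hM : M.IsHermitian) (h : Fintype.card n = 0) :
    eigval hM 1 = 0 := by
  have hlen : ((Multiset.map hM.eigenvalues Finset.univ.val).sort (· ≤ ·)).length = 0 := by
    rw [eigval_length hM, h]
  rw [eigval, List.length_eq_zero_iff.mp hlen]
  simp

end aux

noncomputable def singval {m n : Type} [Fintype m] [Fintype n] [DecidableEq n]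
    (M : Matrix m n ℂ) (j : ℕ) : ℝ :=
  Real.sqrt (eigval (Matrix.isHermitian_conjTranspose_mul_self M) j)

section aux2
variable {n : Type} [Fintype n] [DecidableEq n] {M : Matrix n n ℂ}

lemma mem_spectrum_of_eigvec (B : Matrix n n ℂ) {a : ℝ} {w : n → ℂ}
    (hw : w ≠ 0) (hBw : B *ᵥ w = (a : ℂ) • w) : a ∈ spectrum ℝ B := by
  rw [spectrum.mem_iff]
  intro hunit
  obtain ⟨u, hu⟩ := hunit
  have hCw : (algebraMap ℝ (Matrix n n ℂ) a - B) *ᵥ w = 0 := by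
    rw [Matrix.sub_mulVec, Algebra.algebraMap_eq_smul_one, Matrix.smul_mulVec,
      Matrix.one_mulVec, hBw]
    ext i
    simp [Complex.real_smul]
  have : w = 0 := by
    have h1 : (↑u⁻¹ : Matrix n n ℂ) * (algebraMap ℝ (Matrix n n ℂ) a - B) = 1 := by
      rw [← hu]; exact u.inv_mul
    calc w = ((↑u⁻¹ : Matrix n n ℂ) * (algebraMap ℝ (Matrix n n ℂ) a - B)) *ᵥ w := by
              rw [h1, Matrix.one_mulVec]
      _ = (↑u⁻¹ : Matrix n n ℂ) *ᵥ ((algebraMap ℝ (Matrix n n ℂ) a - B) *ᵥ w) := by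
              rw [Matrix.mulVec_mulVec]
      _ = 0 := by rw [hCw, Matrix.mulVec_zero]
  exact hw this

lemma eigval_eq_of_heq {M' : Matrix n n ℂ} (h : M = M') (hM : M.IsHermitian)
    (hM' : M'.IsHermitian) (j : ℕ) : eigval hM j = eigval hM' j := by
  subst h; rfl

end aux2

section aux3
variable {m n : Type} [Fintype m] [Fintype n] [DecidableEq m] [DecidableEq n]

lemma eigval_top_mul_conjTranspose_nonneg (M : Matrix m n ℂ) :
    0 ≤ eigval (Matrix.isHermitian_mul_conjTranspose_self M) 1 := by
  rcases Nat.eq_zero_or_pos (Fintype.card m) with h | h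
  · rw [eigval_one_zero _ h]
  · obtain ⟨i, hi⟩ := eigval_one_exists (Matrix.isHermitian_mul_conjTranspose_self M) (by omega)
    rw [hi]
    exact Matrix.eigenvalues_self_mul_conjTranspose_nonneg M i

lemma sv_key (M : Matrix m n ℂ) :
    eigval (Matrix.isHermitian_conjTranspose_mul_self M) 1
      ≤ eigval (Matrix.isHermitian_mul_conjTranspose_self M) 1 := by
  rcases Nat.eq_zero_or_pos (Fintype.card n) with h | h
  · rw [eigval_one_zero _ h]
    exact eigval_top_mul_conjTranspose_nonneg M
  obtain ⟨i, hi⟩ := eigval_one_exists (Matrix.isHermitian_conjTranspose_mul_self M) (by omega)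
  set a := eigval (Matrix.isHermitian_conjTranspose_mul_self M) 1 with ha
  rcases le_or_gt a 0 with h0 | h0
  · exact le_trans h0 (eigval_top_mul_conjTranspose_nonneg M)
  -- a > 0 : eigenvector argument
  set hA := Matrix.isHermitian_conjTranspose_mul_self M
  set v : n → ℂ := ⇑(hA.eigenvectorBasis i) with hv
  have hAv : (Mᴴ * M) *ᵥ v = (a : ℂ) • v := by
    calc (Mᴴ * M) *ᵥ v = hA.eigenvalues i • v := hA.mulVec_eigenvectorBasis i
      _ = (a : ℂ) • v := by
          rw [hi]; funext t
          simp only [Pi.smul_apply, smul_eq_mul, Complex.real_smul]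
  have hv0 : v ≠ 0 := by
    intro hv0
    have hnorm := hA.eigenvectorBasis.orthonormal.1 i
    have hz : (hA.eigenvectorBasis i) = 0 := by
      ext t
      exact congrFun hv0 t
    rw [hz] at hnorm
    simp at hnorm
  have hMHv : Mᴴ *ᵥ (M *ᵥ v) = (a : ℂ) • v := by
    rw [Matrix.mulVec_mulVec]; exact hAv
  have hw0 : M *ᵥ v ≠ 0 := by
    intro hw0
    rw [hw0, Matrix.mulVec_zero] at hMHv
    have : v = 0 := by
      have haC : (a : ℂ) ≠ 0 := by
        simpa using ne_of_gt h0
      ext t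
      have := congrFun hMHv t
      simp only [Pi.zero_apply, Pi.smul_apply, smul_eq_mul] at this
      have := (mul_eq_zero.mp this.symm).resolve_left haC
      simp [this]
    exact hv0 this
  have hBw : (M * Mᴴ) *ᵥ (M *ᵥ v) = (a : ℂ) • (M *ᵥ v) := by
    rw [← Matrix.mulVec_mulVec, hMHv, Matrix.mulVec_smul]
  have hmem := mem_spectrum_of_eigvec (M * Mᴴ) hw0 hBw
  rw [Matrix.IsHermitian.spectrum_real_eq_range_eigenvalues
    (Matrix.isHermitian_mul_conjTranspose_self M)] at hmem
  obtain ⟨j, hj⟩ := hmem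
  rw [← hj]
  exact eigenvalues_le_eigval_one _ j

lemma singval_conjTranspose (M : Matrix m n ℂ) : singval Mᴴ 1 = singval M 1 := by
  unfold singval
  congr 1
  have e1 := eigval_eq_of_heq (by rw [Matrix.conjTranspose_conjTranspose])
    (Matrix.isHermitian_conjTranspose_mul_self Mᴴ) (Matrix.isHermitian_mul_conjTranspose_self M) 1
  have e2 := eigval_eq_of_heq (by rw [Matrix.conjTranspose_conjTranspose])
    (Matrix.isHermitian_mul_conjTranspose_self Mᴴ) (Matrix.isHermitian_conjTranspose_mul_self M) 1
  have le1 := sv_key M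
  have le2 := sv_key Mᴴ
  rw [e1, e2] at le2
  rw [e1]
  exact le_antisymm le2 le1

lemma singval_nonneg (M : Matrix m n ℂ) (j : ℕ) : 0 ≤ singval M j := Real.sqrt_nonneg _

lemma singval_le_of_eig_le {M : Matrix m n ℂ} {b : ℝ} (hb : 0 ≤ b)
    (h : ∀ i, (Matrix.isHermitian_conjTranspose_mul_self M).eigenvalues i ≤ b ^ 2) :
    singval M 1 ≤ b := by
  unfold singval
  rcases Nat.eq_zero_or_pos (Fintype.card n) with h0 | h0
  · rw [eigval_one_zero _ h0]; simpa using hb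
  · obtain ⟨i, hi⟩ := eigval_one_exists (Matrix.isHermitian_conjTranspose_mul_self M) (by omega)
    rw [hi]
    calc Real.sqrt _ ≤ Real.sqrt (b ^ 2) := Real.sqrt_le_sqrt (h i)
      _ = b := by rw [Real.sqrt_sq hb]

lemma eigenvalues_diagonal_le {f : n → ℝ} {b : ℝ}
    (hH : (Matrix.diagonal (fun i => (f i : ℂ))).IsHermitian)
    (hfb : ∀ i, f i ≤ b) (i : n) : hH.eigenvalues i ≤ b := by
  have hmem := hH.eigenvalues_mem_spectrum_real i
  have : ((hH.eigenvalues i : ℝ) : ℂ) ∈ spectrum ℂ (Matrix.diagonal (fun i => (f i : ℂ))) := by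
    rw [show ((hH.eigenvalues i : ℝ) : ℂ) = algebraMap ℝ ℂ (hH.eigenvalues i) from rfl,
      spectrum.algebraMap_mem_iff]
    exact hmem
  rw [spectrum_diagonal] at this
  obtain ⟨t, ht⟩ := this
  have ht' : (f t : ℂ) = ((hH.eigenvalues i : ℝ) : ℂ) := ht
  have : f t = hH.eigenvalues i := by exact_mod_cast ht'
  rw [← this]
  exact hfb t

end aux3
/-- A family of unitarily invariant matrix norms (one for every shape). -/
structure UINorm where
  N : ∀ {p q : Type} [Fintype p] [Fintype q] [DecidableEq p] [DecidableEq q],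
      Matrix p q ℂ → ℝ
  nonneg : ∀ {p q : Type} [Fintype p] [Fintype q] [DecidableEq p] [DecidableEq q]
      (M : Matrix p q ℂ), 0 ≤ N M
  triangle : ∀ {p q : Type} [Fintype p] [Fintype q] [DecidableEq p] [DecidableEq q]
      (M₁ M₂ : Matrix p q ℂ), N (M₁ + M₂) ≤ N M₁ + N M₂
  unitary_invariant : ∀ {p q : Type} [Fintype p] [Fintype q] [DecidableEq p] [DecidableEq q]
      (U : Matrix p p ℂ) (M : Matrix p q ℂ) (V : Matrix q q ℂ),
      U ∈ Matrix.unitaryGroup p ℂ → V ∈ Matrix.unitaryGroup q ℂ → N (U * M * V) = N M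
  spec_mul : ∀ {p q r : Type} [Fintype p] [Fintype q] [Fintype r]
      [DecidableEq p] [DecidableEq q] [DecidableEq r]
      (X : Matrix p q ℂ) (Y : Matrix q r ℂ), N (X * Y) ≤ singval X 1 * N Y
  mul_spec : ∀ {p q r : Type} [Fintype p] [Fintype q] [Fintype r]
      [DecidableEq p] [DecidableEq q] [DecidableEq r]
      (X : Matrix p q ℂ) (Y : Matrix q r ℂ), N (X * Y) ≤ N X * singval Y 1

lemma eigenvalues_congr {n : Type} [Fintype n] [DecidableEq n] {M M' : Matrix n n ℂ}
    (h : M = M') (hM : M.IsHermitian) (hM' : M'.IsHermitian) (i : n) :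
    hM.eigenvalues i = hM'.eigenvalues i := by subst h; rfl

/-- Under Ũ₂₁ Σ_k = Σ̂ Ṽ₂₁ and Σ_k Ṽ₂₁* = Ũ₂₁* Σ̂ + Ũ₃₁* E₃₂ with
σ̂_{k+1} = ‖Σ̂‖₂ < σ_k, every unitarily invariant norm satisfies
⦀Ṽ₂₁⦀ ≤ (‖E₃₂‖₂/γ₁)·⦀Ũ₃₁⦀ where γ₁ = (σ_k² − σ̂_{k+1}²)/σ_k. -/
theorem V21_bound
    {k p lk : ℕ}
    (σ : ℕ → ℝ) (hσdec : ∀ i j : ℕ, 1 ≤ i → i ≤ j → σ j ≤ σ i) (hσk : 0 < σ k)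
    (Shat : Matrix (Fin lk) (Fin lk) ℂ)
    (hShat : ∃ d : Fin lk → ℝ, Shat = Matrix.diagonal fun t => (d t : ℂ))
    (σhat : ℝ) (hσhat : σhat = singval Shat 1) (hlt : σhat < σ k)
    (U21 : Matrix (Fin lk) (Fin k) ℂ) (V21 : Matrix (Fin lk) (Fin k) ℂ)
    (U31 : Matrix (Fin p) (Fin k) ℂ) (E32 : Matrix (Fin p) (Fin lk) ℂ)
    (hrel1 : U21 * (Matrix.diagonal fun t : Fin k => (σ ((t : ℕ) + 1) : ℂ)) = Shat * V21)
    (hrel2 : (Matrix.diagonal fun t : Fin k => (σ ((t : ℕ) + 1) : ℂ)) * V21ᴴ = U21ᴴ * Shat + U31ᴴ * E32) :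
    ∀ nrm : UINorm,
      nrm.N V21 ≤ (singval E32 1 / ((σ k ^ 2 - σhat ^ 2) / σ k)) * nrm.N U31 := by
  intro nrm
  set D : Matrix (Fin k) (Fin k) ℂ :=
    Matrix.diagonal fun t : Fin k => (σ ((t : ℕ) + 1) : ℂ) with hD
  set Din : Matrix (Fin k) (Fin k) ℂ :=
    Matrix.diagonal fun t : Fin k => ((σ ((t : ℕ) + 1) : ℂ))⁻¹ with hDin'
  have hσpos : ∀ t : Fin k, 0 < σ ((t : ℕ) + 1) := fun t =>
    lt_of_lt_of_le hσk (hσdec ((t : ℕ) + 1) k (by omega) (by omega))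
  have hDDin : D * Din = 1 := by
    rw [hD, hDin', Matrix.diagonal_mul_diagonal, ← Matrix.diagonal_one]
    refine congrArg Matrix.diagonal (funext fun t => ?_)
    exact mul_inv_cancel₀ (by exact_mod_cast (hσpos t).ne')
  have hDH : Dᴴ = D := by
    rw [hD, Matrix.diagonal_conjTranspose]
    refine congrArg Matrix.diagonal (funext fun t => ?_)
    exact Complex.conj_ofReal _
  have hShH : Shatᴴ = Shat := by
    obtain ⟨d, hd⟩ := hShat
    rw [hd, Matrix.diagonal_conjTranspose]
    refine congrArg Matrix.diagonal (funext fun t => ?_)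
    exact Complex.conj_ofReal _
  have eq1 : V21 * D = Shat * U21 + E32ᴴ * U31 := by
    have h := congrArg Matrix.conjTranspose hrel2
    simp only [Matrix.conjTranspose_mul, Matrix.conjTranspose_add,
      Matrix.conjTranspose_conjTranspose] at h
    rw [hDH, hShH] at h
    exact h
  have hs : (0 : ℝ) < σ k := hσk
  have hshat0 : 0 ≤ σhat := hσhat ▸ singval_nonneg Shat 1
  have he0 : 0 ≤ singval E32 1 := singval_nonneg _ _
  -- singval bound for Din
  have hDinv : singval Din 1 ≤ (σ k)⁻¹ := by
    apply singval_le_of_eig_le (by positivity)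
    intro i
    have hD2 : Dinᴴ * Din =
        Matrix.diagonal (fun t : Fin k => (((σ ((t : ℕ) + 1))⁻¹ ^ 2 : ℝ) : ℂ)) := by
      rw [hDin', Matrix.diagonal_conjTranspose, Matrix.diagonal_mul_diagonal]
      refine congrArg Matrix.diagonal (funext fun t => ?_)
      show star ((σ ((t : ℕ) + 1) : ℂ))⁻¹ * ((σ ((t : ℕ) + 1) : ℂ))⁻¹ = _
      rw [star_inv₀]
      rw [show star ((σ ((t : ℕ) + 1) : ℂ)) = ((σ ((t : ℕ) + 1) : ℂ)) from Complex.conj_ofReal _]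
      push_cast
      ring
    have hH : (Matrix.diagonal (fun t : Fin k =>
        (((σ ((t : ℕ) + 1))⁻¹ ^ 2 : ℝ) : ℂ))).IsHermitian :=
      hD2 ▸ Matrix.isHermitian_conjTranspose_mul_self Din
    rw [eigenvalues_congr hD2 (Matrix.isHermitian_conjTranspose_mul_self Din) hH i]
    apply eigenvalues_diagonal_le hH
    intro t
    have h1 : (σ ((t : ℕ) + 1))⁻¹ ≤ (σ k)⁻¹ := by
      apply inv_anti₀ hs
      exact hσdec ((t : ℕ) + 1) k (by omega) (by omega)
    exact pow_le_pow_left₀ (inv_nonneg.mpr (hσpos t).le) h1 2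
  -- norm chain
  have hV21D : V21 * D * Din = V21 := by rw [Matrix.mul_assoc, hDDin, Matrix.mul_one]
  have hU21D : U21 * D * Din = U21 := by rw [Matrix.mul_assoc, hDDin, Matrix.mul_one]
  have t1 : nrm.N V21 ≤ nrm.N (V21 * D) * (σ k)⁻¹ := by
    calc nrm.N V21 = nrm.N (V21 * D * Din) := by rw [hV21D]
      _ ≤ nrm.N (V21 * D) * singval Din 1 := nrm.mul_spec _ _
      _ ≤ nrm.N (V21 * D) * (σ k)⁻¹ :=
          mul_le_mul_of_nonneg_left hDinv (nrm.nonneg _)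
  rw [← div_eq_mul_inv, le_div_iff₀ hs] at t1
  have h2 : nrm.N (V21 * D) ≤ σhat * nrm.N U21 + singval E32 1 * nrm.N U31 := by
    rw [eq1]
    calc nrm.N (Shat * U21 + E32ᴴ * U31)
        ≤ nrm.N (Shat * U21) + nrm.N (E32ᴴ * U31) := nrm.triangle _ _
      _ ≤ σhat * nrm.N U21 + singval E32 1 * nrm.N U31 := by
          have g1 : nrm.N (Shat * U21) ≤ singval Shat 1 * nrm.N U21 := nrm.spec_mul _ _
          have g2 : nrm.N (E32ᴴ * U31) ≤ singval E32ᴴ 1 * nrm.N U31 := nrm.spec_mul _ _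
          rw [singval_conjTranspose] at g2
          rw [hσhat]
          exact add_le_add g1 g2
  have t3 : nrm.N U21 ≤ σhat * nrm.N V21 * (σ k)⁻¹ := by
    calc nrm.N U21 = nrm.N (U21 * D * Din) := by rw [hU21D]
      _ ≤ nrm.N (U21 * D) * singval Din 1 := nrm.mul_spec _ _
      _ ≤ nrm.N (U21 * D) * (σ k)⁻¹ :=
          mul_le_mul_of_nonneg_left hDinv (nrm.nonneg _)
      _ = nrm.N (Shat * V21) * (σ k)⁻¹ := by rw [hrel1]
      _ ≤ singval Shat 1 * nrm.N V21 * (σ k)⁻¹ :=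
          mul_le_mul_of_nonneg_right (nrm.spec_mul _ _) (by positivity)
      _ = σhat * nrm.N V21 * (σ k)⁻¹ := by rw [hσhat]
  rw [← div_eq_mul_inv, le_div_iff₀ hs] at t3
  -- final algebra
  have hpos : 0 < σ k ^ 2 - σhat ^ 2 := by nlinarith
  have hu0 : 0 ≤ nrm.N U31 := nrm.nonneg _
  have ha0 : 0 ≤ nrm.N V21 := nrm.nonneg _
  have c1 : nrm.N V21 * σ k ≤ σhat * nrm.N U21 + singval E32 1 * nrm.N U31 :=
    le_trans t1 h2
  rw [div_div_eq_mul_div, div_mul_eq_mul_div, le_div_iff₀ hpos]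
  nlinarith [mul_le_mul_of_nonneg_right c1 hs.le,
    mul_le_mul_of_nonneg_left t3 hshat0]
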